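/- Let U, V, W, X, Y, Z be finite-dimensional ℂ-vector spaces with linear maps α : V → W, β : V → U, γ : W → Y, δ : U → Y, φ : U → X, ρ : X → Z, η : Y → Z. If both sequences 0 → V →(α,β) W ⊕ U →(γ,−δ) Y → 0 and 0 → U →(φ,δ) X ⊕ Y →(ρ,η) Z → 0 are short exact, then the sequence 0 → V →(α, φβ, δβ) W ⊕ X ⊕ Y →L Y ⊕ Z → 0 with L(w,x,y) = (γw − y, ρx + ηy) is also short exact. -/

import Mathlib

open LinearMap

/-- If `0 → V → W ⊕ U → Y → 0` and `0 → U → X ⊕ Y → Z → 0` are short exact, then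
`0 → V → W ⊕ X ⊕ Y → Y ⊕ Z → 0`, with maps `v ↦ (αv, φβv, δβv)` and
`L(w,x,y) = (γw − y, ρx + ηy)`, is short exact. -/
theorem glueing_short_exact_long
    (U V W X Y Z : Type)
    [AddCommGroup U] [Module ℂ U] [FiniteDimensional ℂ U]
    [AddCommGroup V] [Module ℂ V] [FiniteDimensional ℂ V]
    [AddCommGroup W] [Module ℂ W] [FiniteDimensional ℂ W]
    [AddCommGroup X] [Module ℂ X] [FiniteDimensional ℂ X]
    [AddCommGroup Y] [Module ℂ Y] [FiniteDimensional ℂ Y]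
    [AddCommGroup Z] [Module ℂ Z] [FiniteDimensional ℂ Z]
    (α : V →ₗ[ℂ] W) (β : V →ₗ[ℂ] U) (γ : W →ₗ[ℂ] Y) (δ : U →ₗ[ℂ] Y)
    (φ : U →ₗ[ℂ] X) (ρ : X →ₗ[ℂ] Z) (η : Y →ₗ[ℂ] Z)
    (f₁ : V →ₗ[ℂ] W × U) (hf₁ : f₁ = α.prod β)
    (f₂ : W × U →ₗ[ℂ] Y)
    (hf₂ : f₂ = γ.comp (LinearMap.fst ℂ W U) - δ.comp (LinearMap.snd ℂ W U))
    (g₁ : U →ₗ[ℂ] X × Y) (hg₁ : g₁ = φ.prod δ)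
    (g₂ : X × Y →ₗ[ℂ] Z)
    (hg₂ : g₂ = ρ.comp (LinearMap.fst ℂ X Y) + η.comp (LinearMap.snd ℂ X Y))
    (h₁ : V →ₗ[ℂ] W × X × Y) (hh₁ : h₁ = α.prod ((φ.comp β).prod (δ.comp β)))
    (L : W × X × Y →ₗ[ℂ] Y × Z)
    (hL : L =
      (γ.comp (LinearMap.fst ℂ W (X × Y)) -
        (LinearMap.snd ℂ X Y).comp (LinearMap.snd ℂ W (X × Y))).prod
      (ρ.comp ((LinearMap.fst ℂ X Y).comp (LinearMap.snd ℂ W (X × Y))) +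
        η.comp ((LinearMap.snd ℂ X Y).comp (LinearMap.snd ℂ W (X × Y)))))
    (hex₁ : Function.Injective f₁ ∧ Function.Surjective f₂ ∧
        LinearMap.range f₁ = LinearMap.ker f₂)
    (hex₂ : Function.Injective g₁ ∧ Function.Surjective g₂ ∧
        LinearMap.range g₁ = LinearMap.ker g₂) :
    Function.Injective h₁ ∧ Function.Surjective L ∧
      LinearMap.range h₁ = LinearMap.ker L := by
  obtain ⟨hf₁i, hf₂s, hfex⟩ := hex₁
  obtain ⟨hg₁i, hg₂s, hgex⟩ := hex₂
  subst hf₁ hf₂ hg₁ hg₂ hh₁ hL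
  have hf₂0 : ∀ w u, γ w - δ u = 0 → ∃ v, α v = w ∧ β v = u := by
    intro w u h
    have : (w, u) ∈ LinearMap.ker (γ.comp (LinearMap.fst ℂ W U) -
        δ.comp (LinearMap.snd ℂ W U)) := by simpa using h
    rw [← hfex] at this
    obtain ⟨v, hv⟩ := this
    exact ⟨v, congrArg Prod.fst hv, congrArg Prod.snd hv⟩
  have hg₂0 : ∀ x y, ρ x + η y = 0 → ∃ u, φ u = x ∧ δ u = y := by
    intro x y h
    have : (x, y) ∈ LinearMap.ker (ρ.comp (LinearMap.fst ℂ X Y) +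
        η.comp (LinearMap.snd ℂ X Y)) := by simpa using h
    rw [← hgex] at this
    obtain ⟨u, hu⟩ := this
    exact ⟨u, congrArg Prod.fst hu, congrArg Prod.snd hu⟩
  have hgd : ∀ u : U, ρ (φ u) + η (δ u) = 0 := by
    intro u
    have : (φ.prod δ) u ∈ LinearMap.ker (ρ.comp (LinearMap.fst ℂ X Y) +
        η.comp (LinearMap.snd ℂ X Y)) := by
      rw [← hgex]; exact ⟨u, rfl⟩
    simpa using this
  have hfd : ∀ v : V, γ (α v) - δ (β v) = 0 := by
    intro v
    have : (α.prod β) v ∈ LinearMap.ker (γ.comp (LinearMap.fst ℂ W U) -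
        δ.comp (LinearMap.snd ℂ W U)) := by
      rw [← hfex]; exact ⟨v, rfl⟩
    simpa using this
  refine ⟨?_, ?_, ?_⟩
  · rw [injective_iff_map_eq_zero]
    intro v hv
    simp only [LinearMap.prod_apply, Function.prod, LinearMap.comp_apply,
      Prod.mk_eq_zero] at hv
    obtain ⟨h1, h2, h3⟩ := hv
    have hb : β v = 0 := by
      apply hg₁i
      simp [Prod.ext_iff, h2, h3]
    apply hf₁i
    simp [Prod.ext_iff, h1, hb]
  · rintro ⟨y₀, z₀⟩
    obtain ⟨⟨x₂, y₂⟩, hxy⟩ := hg₂s z₀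
    obtain ⟨⟨w, u⟩, hwu⟩ := hf₂s (y₀ + y₂)
    simp only [LinearMap.add_apply, LinearMap.sub_apply, LinearMap.comp_apply,
      LinearMap.fst_apply, LinearMap.snd_apply] at hxy hwu
    refine ⟨(w, x₂ + φ u, y₂ + δ u), ?_⟩
    have hgdu := hgd u
    simp only [LinearMap.prod_apply, Function.prod, LinearMap.sub_apply,
      LinearMap.add_apply, LinearMap.comp_apply, LinearMap.fst_apply,
      LinearMap.snd_apply, map_add, Prod.mk.injEq]
    constructor
    · rw [sub_eq_iff_eq_add] at hwu ⊢
      rw [hwu]; abel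
    · rw [← hxy]
      have : ρ (φ u) = -η (δ u) := eq_neg_of_add_eq_zero_left hgdu
      rw [this]; abel
  · apply le_antisymm
    · rintro _ ⟨v, rfl⟩
      have h1 := hfd v
      have h2 := hgd (β v)
      simp only [LinearMap.mem_ker, LinearMap.prod_apply, Function.prod,
        LinearMap.sub_apply, LinearMap.add_apply, LinearMap.comp_apply,
        LinearMap.fst_apply, LinearMap.snd_apply, Prod.mk_eq_zero]
      exact ⟨h1, h2⟩
    · rintro ⟨w, x, y⟩ hm
      simp only [LinearMap.mem_ker, LinearMap.prod_apply, Function.prod,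
        LinearMap.sub_apply, LinearMap.add_apply, LinearMap.comp_apply,
        LinearMap.fst_apply, LinearMap.snd_apply, Prod.mk_eq_zero] at hm
      obtain ⟨h1, h2⟩ := hm
      have hy : γ w = y := sub_eq_zero.mp h1
      obtain ⟨u, hux, huy⟩ := hg₂0 x y h2
      obtain ⟨v, hvw, hvu⟩ := hf₂0 w u (by rw [huy, hy, sub_self])
      exact ⟨v, by simp [LinearMap.prod_apply, Function.prod, hvw, hvu, hux, huy]⟩
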